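/- Let b ≥ 0 and p > 2 be real numbers, and let V : ℝ² → ℝ be measurable with 0 < V₀ ≤ V(x) ≤ V_∞ for all x ∈ ℝ² (for some constants V₀, V_∞). Let u : ℝ² → ℝ be continuously differentiable with ∫_{ℝ²} u² dx > 0, such that the functions x ↦ ‖∇u(x)‖², x ↦ u(x)² and x ↦ |u(x)|^p are integrable on ℝ² and (x,y) ↦ |log(‖x−y‖)|·u(x)²u(y)² is integrable on ℝ²×ℝ². For t > 0 define u_t : ℝ² → ℝ by u_t(x) = t²u(tx). Then I(u_t) → −∞ as t → ∞, where I(u_t) = ½∫_{ℝ²}(‖∇u_t(x)‖² + V(x)u_t(x)²)dx + (1/(8π))∬_{ℝ²×ℝ²} log(‖x−y‖)u_t(x)²u_t(y)² dxdy − (b/p)∫_{ℝ²}|u_t(x)|^p dx. -/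

import Mathlib

open MeasureTheory Filter
open scoped InnerProductSpace

abbrev E2 := EuclideanSpace ℝ (Fin 2)

/-- The energy functional `I` of the planar Schrödinger–Poisson problem. -/
noncomputable def energyI (b p : ℝ) (V u : E2 → ℝ) : ℝ :=
  (1 / 2) * (∫ x : E2, (‖gradient u x‖ ^ 2 + V x * (u x) ^ 2)) +
    (1 / (8 * Real.pi)) *
      (∫ z : E2 × E2, Real.log ‖z.1 - z.2‖ * (u z.1) ^ 2 * (u z.2) ^ 2) -
    (b / p) * (∫ x : E2, |u x| ^ p)

lemma grad_scale (u : E2 → ℝ) (hu : ContDiff ℝ 1 u) (t : ℝ) (x : E2) :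
    gradient (fun x => t ^ 2 * u (t • x)) x = t ^ 3 • gradient u (t • x) := by
  have hD : DifferentiableAt ℝ u (t • x) :=
    (hu.differentiable one_ne_zero).differentiableAt
  have h1 : HasFDerivAt (fun x : E2 => t • x)
      (t • ContinuousLinearMap.id ℝ E2) x := (hasFDerivAt_id x).const_smul t
  have h2 : HasFDerivAt (fun x : E2 => u (t • x))
      ((fderiv ℝ u (t • x)).comp (t • ContinuousLinearMap.id ℝ E2)) x :=
    hD.hasFDerivAt.comp x h1
  have h3 := h2.const_mul (t ^ 2)
  have key : (t ^ 2 • ((fderiv ℝ u (t • x)).comp (t • ContinuousLinearMap.id ℝ E2)))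
      = t ^ 3 • fderiv ℝ u (t • x) := by
    ext v
    simp [ContinuousLinearMap.smul_apply, _root_.map_smul]
    ring
  rw [key] at h3
  simp only [gradient, h3.fderiv, _root_.map_smul]

instance : ((volume : Measure E2).prod (volume : Measure E2)).IsAddHaarMeasure :=
  MeasureTheory.Measure.prod.instIsAddHaarMeasure _ _

lemma diag_null : (volume : Measure (E2 × E2)) {z | z.1 = z.2} = 0 := by
  have hS : MeasurableSet {z : E2 × E2 | z.1 = z.2} :=
    (isClosed_eq continuous_fst continuous_snd).measurableSet
  rw [Measure.volume_eq_prod, Measure.prod_apply hS]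
  have h : ∀ x : E2, (volume : Measure E2) (Prod.mk x ⁻¹' {z : E2 × E2 | z.1 = z.2}) = 0 := by
    intro x
    have : (Prod.mk x ⁻¹' {z : E2 × E2 | z.1 = z.2}) = {x} := by
      ext y; simp [eq_comm]
    rw [this, measure_singleton]
  simp [h]

/-- Lemma 2.6: along the fibre `u_t(x) = t²u(tx)`, the energy `I(u_t)` tends to `−∞`
as `t → ∞`. -/
theorem stmt10 (b p : ℝ) (hb : 0 ≤ b) (hp : 2 < p)
    (V : E2 → ℝ) (hVmeas : Measurable V)
    (V₀ V_inf : ℝ) (hV₀ : 0 < V₀) (hVbd : ∀ x, V₀ ≤ V x ∧ V x ≤ V_inf)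
    (u : E2 → ℝ) (hu : ContDiff ℝ 1 u)
    (hupos : 0 < ∫ x : E2, (u x) ^ 2)
    (hint1 : Integrable (fun x : E2 => ‖gradient u x‖ ^ 2))
    (hint2 : Integrable (fun x : E2 => (u x) ^ 2))
    (hint3 : Integrable (fun x : E2 => |u x| ^ p))
    (hint4 : Integrable
      (fun z : E2 × E2 => |Real.log ‖z.1 - z.2‖| * (u z.1) ^ 2 * (u z.2) ^ 2)) :
    Tendsto (fun t : ℝ => energyI b p V (fun x => t ^ 2 * u (t • x))) atTop atBot := by

  set G := ∫ x : E2, ‖gradient u x‖ ^ 2 with hG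
  set M := ∫ x : E2, (u x) ^ 2 with hM
  set A := ∫ z : E2 × E2, Real.log ‖z.1 - z.2‖ * (u z.1) ^ 2 * (u z.2) ^ 2 with hA
  set C := (1 / 2) * G + (1 / 2) * (V_inf * M) + A / (8 * Real.pi) with hC
  set c := M ^ 2 / (8 * Real.pi) with hc
  clear_value G M A C c
  have hπ : (0:ℝ) < Real.pi := Real.pi_pos
  have hVinf : 0 < V_inf := lt_of_lt_of_le hV₀ ((hVbd 0).1.trans (hVbd 0).2)
  have hVM : 0 ≤ V_inf * M := le_of_lt (mul_pos hVinf hupos)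
  -- main bound
  have main : ∀ t : ℝ, 1 ≤ t →
      energyI b p V (fun x => t ^ 2 * u (t • x)) ≤ t ^ 4 * (C - c * Real.log t) := by
    intro t ht
    have ht0 : 0 < t := lt_of_lt_of_le one_pos ht
    have htne : t ≠ 0 := ht0.ne'
    -- gradient term rewrite
    have hgr : (fun x : E2 => ‖gradient (fun x => t ^ 2 * u (t • x)) x‖ ^ 2)
        = fun x : E2 => t ^ 6 * ‖gradient u (t • x)‖ ^ 2 := by
      funext x
      rw [grad_scale u hu t x, norm_smul, Real.norm_eq_abs,
        abs_of_pos (pow_pos ht0 3), mul_pow]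
      ring
    have hsq : (fun x : E2 => ((fun x : E2 => t ^ 2 * u (t • x)) x) ^ 2)
        = fun x : E2 => t ^ 4 * (u (t • x)) ^ 2 := by
      funext x; ring
    have hI1 : Integrable (fun x : E2 => ‖gradient (fun x => t ^ 2 * u (t • x)) x‖ ^ 2) := by
      rw [hgr]; exact (hint1.comp_smul htne).const_mul _
    have hI2 : Integrable (fun x : E2 => ((fun x : E2 => t ^ 2 * u (t • x)) x) ^ 2) := by
      rw [hsq]; exact (hint2.comp_smul htne).const_mul _
    have hVbound : ∃ Cb : ℝ, ∀ x, ‖V x‖ ≤ Cb :=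
      ⟨V_inf, fun x => by
        rw [Real.norm_eq_abs, abs_of_pos (lt_of_lt_of_le hV₀ (hVbd x).1)]
        exact (hVbd x).2⟩
    have hIV : Integrable (fun x : E2 => V x * ((fun x : E2 => t ^ 2 * u (t • x)) x) ^ 2) :=
      hI2.bdd_mul hVmeas.aestronglyMeasurable (Filter.Eventually.of_forall hVbound.choose_spec)
    -- exact values
    have hfr2 : Module.finrank ℝ E2 = 2 := by simp
    have E1 : (∫ x : E2, ‖gradient (fun x => t ^ 2 * u (t • x)) x‖ ^ 2) = t ^ 4 * G := by
      rw [hgr, integral_const_mul _ _,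
        Measure.integral_comp_smul_of_nonneg volume
          (fun y : E2 => ‖gradient u y‖ ^ 2) t (hR := ht0.le), hfr2]
      simp only [smul_eq_mul, ← hG]
      field_simp
    have E2eq : (∫ x : E2, ((fun x : E2 => t ^ 2 * u (t • x)) x) ^ 2) = t ^ 2 * M := by
      rw [hsq, integral_const_mul _ _,
        Measure.integral_comp_smul_of_nonneg volume
          (fun y : E2 => (u y) ^ 2) t (hR := ht0.le), hfr2]
      simp only [smul_eq_mul, ← hM]
      field_simp
    have EV : (∫ x : E2, V x * ((fun x : E2 => t ^ 2 * u (t • x)) x) ^ 2)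
        ≤ V_inf * (t ^ 2 * M) := by
      calc (∫ x : E2, V x * ((fun x : E2 => t ^ 2 * u (t • x)) x) ^ 2)
          ≤ ∫ x : E2, V_inf * ((fun x : E2 => t ^ 2 * u (t • x)) x) ^ 2 :=
            integral_mono hIV (hI2.const_mul _)
              (fun x => mul_le_mul_of_nonneg_right (hVbd x).2 (sq_nonneg _))
        _ = V_inf * (t ^ 2 * M) := by rw [integral_const_mul _ _, E2eq]
    -- log term
    have hIlog : Integrable
        (fun z : E2 × E2 => Real.log ‖z.1 - z.2‖ * (u z.1) ^ 2 * (u z.2) ^ 2) := by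
      refine hint4.mono' ?_ ?_
      · exact ((Real.measurable_log.comp
            ((measurable_fst.sub measurable_snd).norm)).mul
            ((hu.continuous.measurable.comp measurable_fst).pow_const 2)).mul
            ((hu.continuous.measurable.comp measurable_snd).pow_const 2)
            |>.aestronglyMeasurable
      · refine Filter.Eventually.of_forall (fun z => ?_)
        rw [Real.norm_eq_abs, abs_mul, abs_mul, abs_of_nonneg (sq_nonneg (u z.1)),
          abs_of_nonneg (sq_nonneg (u z.2))]
    have hIuu : Integrable (fun z : E2 × E2 => (u z.1) ^ 2 * (u z.2) ^ 2) := by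
      rw [Measure.volume_eq_prod]
      exact hint2.mul_prod hint2
    have Elog : (∫ z : E2 × E2,
        Real.log ‖z.1 - z.2‖ * ((fun x : E2 => t ^ 2 * u (t • x)) z.1) ^ 2
          * ((fun x : E2 => t ^ 2 * u (t • x)) z.2) ^ 2)
        = t ^ 4 * (A - Real.log t * M ^ 2) := by
      set F : E2 × E2 → ℝ := fun w =>
        (Real.log ‖w.1 - w.2‖ - Real.log t) * (u w.1) ^ 2 * (u w.2) ^ 2 with hF
      have hae : ∀ᵐ z : E2 × E2, z.1 ≠ z.2 := by
        rw [ae_iff]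
        simpa using diag_null
      have step1 : (∫ z : E2 × E2,
          Real.log ‖z.1 - z.2‖ * ((fun x : E2 => t ^ 2 * u (t • x)) z.1) ^ 2
            * ((fun x : E2 => t ^ 2 * u (t • x)) z.2) ^ 2)
          = ∫ z : E2 × E2, t ^ 8 * F (t • z) := by
        refine integral_congr_ae ?_
        filter_upwards [hae] with z hz
        have hnorm : ‖t • z.1 - t • z.2‖ = t * ‖z.1 - z.2‖ := by
          rw [← smul_sub, norm_smul, Real.norm_eq_abs, abs_of_pos ht0]
        have hne : ‖z.1 - z.2‖ ≠ 0 := by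
          simp [sub_eq_zero, hz]
        have hlog : Real.log ‖t • z.1 - t • z.2‖ = Real.log t + Real.log ‖z.1 - z.2‖ := by
          rw [hnorm, Real.log_mul htne hne]
        simp only [hF, Prod.smul_fst, Prod.smul_snd, hlog]
        ring
      rw [step1, integral_const_mul _ _, Measure.volume_eq_prod,
        Measure.integral_comp_smul_of_nonneg (volume.prod volume) F t (hR := ht0.le)]
      have hfr4 : Module.finrank ℝ (E2 × E2) = 4 := by simp
      rw [hfr4]
      have hFsplit : F = fun z : E2 × E2 =>
          Real.log ‖z.1 - z.2‖ * (u z.1) ^ 2 * (u z.2) ^ 2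
            - Real.log t * ((u z.1) ^ 2 * (u z.2) ^ 2) := by
        funext z; simp only [hF]; ring
      have hFint : (∫ z : E2 × E2, F z ∂(volume.prod volume)) = A - Real.log t * M ^ 2 := by
        rw [← Measure.volume_eq_prod, hFsplit, integral_sub hIlog (hIuu.const_mul _), integral_const_mul _ _, ← hA]
        have huu2 : (∫ z : E2 × E2, (u z.1) ^ 2 * (u z.2) ^ 2) = M * M := by
          rw [Measure.volume_eq_prod, hM]
          exact integral_prod_mul (μ := (volume : Measure E2)) (ν := (volume : Measure E2)) (fun a : E2 => (u a) ^ 2) (fun a : E2 => (u a) ^ 2)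
        rw [huu2]
        ring
      rw [hFint]
      simp only [smul_eq_mul]
      field_simp
    -- p term
    have Ep : 0 ≤ ∫ x : E2, |(fun x : E2 => t ^ 2 * u (t • x)) x| ^ p :=
      integral_nonneg fun x => Real.rpow_nonneg (abs_nonneg _) p
    have hbp : 0 ≤ b / p := div_nonneg hb (by linarith)
    -- assemble
    have hsplit : (∫ x : E2, (‖gradient (fun x => t ^ 2 * u (t • x)) x‖ ^ 2
        + V x * ((fun x : E2 => t ^ 2 * u (t • x)) x) ^ 2))
        = (∫ x : E2, ‖gradient (fun x => t ^ 2 * u (t • x)) x‖ ^ 2)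
          + ∫ x : E2, V x * ((fun x : E2 => t ^ 2 * u (t • x)) x) ^ 2 :=
      integral_add hI1 hIV
    have h8π : (0:ℝ) < 8 * Real.pi := by positivity
    have bound1 : energyI b p V (fun x => t ^ 2 * u (t • x))
        ≤ (1 / 2) * (t ^ 4 * G + V_inf * (t ^ 2 * M))
          + (1 / (8 * Real.pi)) * (t ^ 4 * (A - Real.log t * M ^ 2)) := by
      rw [energyI, hsplit, E1, Elog]
      have h1 : (1 / 2 : ℝ) * (t ^ 4 * G
          + ∫ x : E2, V x * ((fun x : E2 => t ^ 2 * u (t • x)) x) ^ 2)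
          ≤ (1 / 2) * (t ^ 4 * G + V_inf * (t ^ 2 * M)) := by
        apply mul_le_mul_of_nonneg_left _ (by norm_num)
        linarith [EV]
      have h2 : 0 ≤ (b / p) * ∫ x : E2, |(fun x : E2 => t ^ 2 * u (t • x)) x| ^ p :=
        mul_nonneg hbp Ep
      linarith
    have key : t ^ 4 * (C - c * Real.log t)
        - ((1 / 2) * (t ^ 4 * G + V_inf * (t ^ 2 * M))
          + (1 / (8 * Real.pi)) * (t ^ 4 * (A - Real.log t * M ^ 2)))
        = (1 / 2) * (V_inf * M) * (t ^ 4 - t ^ 2) := by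
      rw [hC, hc]
      field_simp
      ring
    have ht24 : t ^ 2 ≤ t ^ 4 := pow_le_pow_right₀ ht (by norm_num)
    have : 0 ≤ (1 / 2) * (V_inf * M) * (t ^ 4 - t ^ 2) := by
      apply mul_nonneg (mul_nonneg (by norm_num) hVM)
      linarith
    linarith
  -- tendsto part
  have hM2 : (0:ℝ) < M ^ 2 := pow_pos hupos 2
  have hcpos : 0 < c := by rw [hc]; positivity
  have h1 : Tendsto (fun t : ℝ => t ^ 4) atTop atTop :=
    tendsto_pow_atTop (by norm_num)
  have h2 : Tendsto (fun t : ℝ => C - c * Real.log t) atTop atBot := by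
    have hl : Tendsto (fun t : ℝ => c * Real.log t) atTop atTop :=
      Real.tendsto_log_atTop.const_mul_atTop hcpos
    have hn : Tendsto (fun t : ℝ => -(c * Real.log t)) atTop atBot :=
      tendsto_neg_atTop_atBot.comp hl
    simpa [sub_eq_add_neg] using tendsto_atBot_add_const_left atTop C hn
  have h3 : Tendsto (fun t : ℝ => t ^ 4 * (C - c * Real.log t)) atTop atBot :=
    h1.atTop_mul_atBot₀ h2
  refine tendsto_atBot_mono' atTop ?_ h3
  filter_upwards [eventually_ge_atTop 1] with t ht
  exact main t ht
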